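/- The two functions u₁(x) = e^{x/2}/√(e^{2x}-1) and u₂(x) = (e^{2x}+1)/(e^{x/2}√(e^{2x}-1)) both satisfy the equation -u''(x) + P(x)u(x) = 0 on (0,∞), where P(x) = (e^{4x}+10e^{2x}+1)/(4(e^{2x}-1)²), and they are linearly independent (their Wronskian is a nonzero constant). -/

import Mathlib

open Real Filter

noncomputable def P (x : ℝ) : ℝ :=
  (Real.exp (4*x) + 10 * Real.exp (2*x) + 1) / (4 * (Real.exp (2*x) - 1)^2)

noncomputable def u₁ (x : ℝ) : ℝ :=
  Real.exp (x/2) / Real.sqrt (Real.exp (2*x) - 1)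

noncomputable def u₂ (x : ℝ) : ℝ :=
  (Real.exp (2*x) + 1) / (Real.exp (x/2) * Real.sqrt (Real.exp (2*x) - 1))


noncomputable def s (x : ℝ) : ℝ := Real.sqrt (Real.exp (2*x) - 1)

lemma hE {x : ℝ} (hx : 0 < x) : 1 < Real.exp (2*x) := by
  exact Real.one_lt_exp_iff.mpr (by linarith)

lemma hs_pos {x : ℝ} (hx : 0 < x) : 0 < s x :=
  Real.sqrt_pos.mpr (by linarith [hE hx])

lemma hs_sq {x : ℝ} (hx : 0 < x) : s x ^ 2 = Real.exp (2*x) - 1 := by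
  rw [sq, s, Real.mul_self_sqrt (by linarith [hE hx])]

lemma hds {x : ℝ} (hx : 0 < x) :
    HasDerivAt s (Real.exp (2*x) / s x) x := by
  have hg : HasDerivAt (fun y : ℝ => Real.exp (2*y) - 1) (2 * Real.exp (2*x)) x := by
    have h1 : HasDerivAt (fun y : ℝ => 2*y) 2 x := by
      simpa using (hasDerivAt_id x).const_mul 2
    simpa [mul_comm] using (h1.exp.sub_const 1)
  have hne : Real.exp (2*x) - 1 ≠ 0 := by linarith [hE hx]
  have := (Real.hasDerivAt_sqrt hne).comp x hg
  convert this using 1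
  · rfl
  · rfl
  · rfl
  rw [s]
  field_simp

noncomputable def d₁ (x : ℝ) : ℝ :=
  -(Real.exp (x/2) * (Real.exp (2*x)+1)) / (2*(Real.exp (2*x)-1) * s x)

noncomputable def d₂ (x : ℝ) : ℝ :=
  (Real.exp (2*x)^2 - 6*Real.exp (2*x) + 1) / (2*Real.exp (x/2)*(Real.exp (2*x)-1) * s x)

lemma hd₁ {x : ℝ} (hx : 0 < x) : HasDerivAt u₁ (d₁ x) x := by
  have hnum : HasDerivAt (fun y : ℝ => Real.exp (y/2)) (Real.exp (x/2) * (1/2)) x :=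
    ((hasDerivAt_id x).div_const 2).exp
  have h := hnum.div (hds hx) (hs_pos hx).ne'
  have heq : u₁ = fun y => Real.exp (y/2) / s y := rfl
  rw [heq]
  convert h using 1
  · rfl
  · rfl
  · rfl
  have ht := hs_sq hx
  have ht0 := (hs_pos hx).ne'
  have hE1 : Real.exp (2*x) - 1 ≠ 0 := by linarith [hE hx]
  rw [d₁]
  have ha0 : Real.exp (x/2) ≠ 0 := Real.exp_ne_zero _
  generalize Real.exp (x/2) = a at *
  generalize s x = t at *
  generalize Real.exp (2*x) = E at *
  obtain rfl : E = t^2 + 1 := by linarith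
  field_simp
  ring

lemma hd₂ {x : ℝ} (hx : 0 < x) : HasDerivAt u₂ (d₂ x) x := by
  have hnum : HasDerivAt (fun y : ℝ => Real.exp (2*y) + 1) (2 * Real.exp (2*x)) x := by
    have h1 : HasDerivAt (fun y : ℝ => 2*y) 2 x := by
      simpa using (hasDerivAt_id x).const_mul 2
    simpa [mul_comm] using (h1.exp.add_const 1)
  have ha : HasDerivAt (fun y : ℝ => Real.exp (y/2)) (Real.exp (x/2) * (1/2)) x :=
    ((hasDerivAt_id x).div_const 2).exp
  have hden := ha.mul (hds hx)
  have hden0 : Real.exp (x/2) * s x ≠ 0 :=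
    mul_ne_zero (Real.exp_ne_zero _) (hs_pos hx).ne'
  have h := hnum.div hden hden0
  have heq : u₂ = fun y => (Real.exp (2*y) + 1) / (Real.exp (y/2) * s y) := rfl
  rw [heq]
  convert h using 1
  · rfl
  · rfl
  · rfl
  have ht := hs_sq hx
  have ht0 := (hs_pos hx).ne'
  have hE1 : Real.exp (2*x) - 1 ≠ 0 := by linarith [hE hx]
  rw [d₂]
  simp only [Pi.mul_apply, Pi.div_apply, Pi.neg_apply]
  have ha0 : Real.exp (x/2) ≠ 0 := Real.exp_ne_zero _
  generalize Real.exp (x/2) = a at *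
  generalize s x = t at *
  generalize Real.exp (2*x) = E at *
  obtain rfl : E = t^2 + 1 := by linarith
  field_simp
  ring

lemma hexp4 (x : ℝ) : Real.exp (4*x) = Real.exp (2*x)^2 := by
  rw [sq, ← Real.exp_add]; ring_nf

lemma hdd₁ {x : ℝ} (hx : 0 < x) : HasDerivAt d₁ (P x * u₁ x) x := by
  have ha : HasDerivAt (fun y : ℝ => Real.exp (y/2)) (Real.exp (x/2) * (1/2)) x :=
    ((hasDerivAt_id x).div_const 2).exp
  have hE2 : HasDerivAt (fun y : ℝ => Real.exp (2*y) + 1) (2 * Real.exp (2*x)) x := by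
    have h1 : HasDerivAt (fun y : ℝ => 2*y) 2 x := by
      simpa using (hasDerivAt_id x).const_mul 2
    simpa [mul_comm] using (h1.exp.add_const 1)
  have hnum := (ha.mul hE2).neg
  have hE3 : HasDerivAt (fun y : ℝ => 2*(Real.exp (2*y) - 1)) (2*(2 * Real.exp (2*x))) x := by
    have h1 : HasDerivAt (fun y : ℝ => 2*y) 2 x := by
      simpa using (hasDerivAt_id x).const_mul 2
    simpa [mul_comm, mul_assoc] using ((h1.exp.sub_const 1).const_mul 2)
  have hden := hE3.mul (hds hx)
  have ht := hs_sq hx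
  have ht0 := (hs_pos hx).ne'
  have hE1 : Real.exp (2*x) - 1 ≠ 0 := by linarith [hE hx]
  have hden0 : 2*(Real.exp (2*x) - 1) * s x ≠ 0 := by
    exact mul_ne_zero (mul_ne_zero two_ne_zero hE1) ht0
  have h := hnum.div hden hden0
  have heq : d₁ = fun y => -(Real.exp (y/2) * (Real.exp (2*y)+1)) / (2*(Real.exp (2*y)-1) * s y) := rfl
  rw [heq]
  convert h using 1
  · rfl
  · rfl
  · rfl
  rw [P, u₁, hexp4]
  have hs' : Real.sqrt (Real.exp (2*x) - 1) = s x := rfl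
  rw [hs']
  simp only [Pi.mul_apply, Pi.div_apply, Pi.neg_apply]
  have ha0 : Real.exp (x/2) ≠ 0 := Real.exp_ne_zero _
  generalize Real.exp (x/2) = a at *
  generalize s x = t at *
  generalize Real.exp (2*x) = E at *
  obtain rfl : E = t^2 + 1 := by linarith
  field_simp
  ring

lemma hdd₂ {x : ℝ} (hx : 0 < x) : HasDerivAt d₂ (P x * u₂ x) x := by
  have ha : HasDerivAt (fun y : ℝ => Real.exp (y/2)) (Real.exp (x/2) * (1/2)) x :=
    ((hasDerivAt_id x).div_const 2).exp
  have hE2 : HasDerivAt (fun y : ℝ => Real.exp (2*y)) (2 * Real.exp (2*x)) x := by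
    have h1 : HasDerivAt (fun y : ℝ => 2*y) 2 x := by
      simpa using (hasDerivAt_id x).const_mul 2
    simpa [mul_comm] using h1.exp
  have hnum : HasDerivAt (fun y : ℝ => Real.exp (2*y)^2 - 6*Real.exp (2*y) + 1)
      (2 * Real.exp (2*x)^1 * (2*Real.exp (2*x)) - 6*(2*Real.exp (2*x))) x :=
    ((hE2.pow 2).sub (hE2.const_mul 6)).add_const 1
  have h2a : HasDerivAt (fun y : ℝ => 2*Real.exp (y/2)) (2*(Real.exp (x/2) * (1/2))) x :=
    ha.const_mul 2
  have hd1 := (h2a.mul (hE2.sub_const 1)).mul (hds hx)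
  have ht := hs_sq hx
  have ht0 := (hs_pos hx).ne'
  have hE1 : Real.exp (2*x) - 1 ≠ 0 := by linarith [hE hx]
  have hden0 : 2*Real.exp (x/2)*(Real.exp (2*x) - 1) * s x ≠ 0 := by
    exact mul_ne_zero (mul_ne_zero (mul_ne_zero two_ne_zero (Real.exp_ne_zero _)) hE1) ht0
  have h := hnum.div hd1 hden0
  have heq : d₂ = fun y => (Real.exp (2*y)^2 - 6*Real.exp (2*y) + 1) /
      (2*Real.exp (y/2)*(Real.exp (2*y)-1) * s y) := rfl
  rw [heq]
  convert h using 1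
  · rfl
  · rfl
  · rfl
  rw [P, u₂, hexp4]
  have hs' : Real.sqrt (Real.exp (2*x) - 1) = s x := rfl
  rw [hs']
  simp only [Pi.mul_apply, Pi.div_apply, Pi.neg_apply]
  have ha0 : Real.exp (x/2) ≠ 0 := Real.exp_ne_zero _
  generalize Real.exp (x/2) = a at *
  generalize s x = t at *
  generalize Real.exp (2*x) = E at *
  obtain rfl : E = t^2 + 1 := by linarith
  field_simp
  ring

lemma deriv_u₁_eq {x : ℝ} (hx : 0 < x) : deriv u₁ x = d₁ x := (hd₁ hx).deriv

lemma deriv_u₂_eq {x : ℝ} (hx : 0 < x) : deriv u₂ x = d₂ x := (hd₂ hx).deriv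

lemma dd₁_eq {x : ℝ} (hx : 0 < x) : deriv (deriv u₁) x = P x * u₁ x := by
  have hev : deriv u₁ =ᶠ[nhds x] d₁ := by
    filter_upwards [isOpen_Ioi.mem_nhds (Set.mem_Ioi.mpr hx)] with y hy
    exact deriv_u₁_eq hy
  rw [hev.deriv_eq]
  exact (hdd₁ hx).deriv

lemma dd₂_eq {x : ℝ} (hx : 0 < x) : deriv (deriv u₂) x = P x * u₂ x := by
  have hev : deriv u₂ =ᶠ[nhds x] d₂ := by
    filter_upwards [isOpen_Ioi.mem_nhds (Set.mem_Ioi.mpr hx)] with y hy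
    exact deriv_u₂_eq hy
  rw [hev.deriv_eq]
  exact (hdd₂ hx).deriv

theorem stmt_7 :
    (∀ x : ℝ, 0 < x → -(deriv (deriv u₁) x) + P x * u₁ x = 0) ∧
    (∀ x : ℝ, 0 < x → -(deriv (deriv u₂) x) + P x * u₂ x = 0) ∧
    (∃ c : ℝ, c ≠ 0 ∧ ∀ x : ℝ, 0 < x →
      u₁ x * deriv u₂ x - u₂ x * deriv u₁ x = c) := by
  refine ⟨fun x hx => by rw [dd₁_eq hx]; ring,
    fun x hx => by rw [dd₂_eq hx]; ring, 1, one_ne_zero, fun x hx => ?_⟩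
  rw [deriv_u₁_eq hx, deriv_u₂_eq hx]
  have ht := hs_sq hx
  have ht0 := (hs_pos hx).ne'
  have hE1 : Real.exp (2*x) - 1 ≠ 0 := by linarith [hE hx]
  have hs' : Real.sqrt (Real.exp (2*x) - 1) = s x := rfl
  rw [u₁, u₂, d₁, d₂, hs']
  have ha0 : Real.exp (x/2) ≠ 0 := Real.exp_ne_zero _
  generalize Real.exp (x/2) = a at *
  generalize s x = t at *
  generalize Real.exp (2*x) = E at *
  obtain rfl : E = t^2 + 1 := by linarith
  field_simp
  ring
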